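/- Let α < β with αβ ≠ 0 and let γ ∈ ℝ satisfy αγ > −1 and βγ > −1. Then for the function f̄(x) = |x|^γ on ℝ, R_{α,β}(f̄) = (max over ε ∈ [0,1] of C_{α,β,γ}(ε)) · (γα+1)^{1/α}/(γβ+1)^{1/β}, and this maximum over the compact interval [0,1] is attained. -/

import Mathlib

open MeasureTheory Set

/-- The `p`-mean of `f` over the interval `(a, b)`:
`M_{(a,b),p}(f) = ((1/(b-a)) ∫_a^b f(x)^p dx)^{1/p}`. -/
noncomputable def intervalMean (p a b : ℝ) (f : ℝ → ℝ) : ℝ :=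
  ((b - a)⁻¹ * ∫ x in a..b, f x ^ p) ^ (1 / p)

/-- The set of ratios `M_{I,β}(f)/M_{I,α}(f)` over bounded intervals `I ⊂ (0,∞)`;
its supremum is `P_{α,β}(f)`. -/
def ratioSetPos (α β : ℝ) (f : ℝ → ℝ) : Set ℝ :=
  {r | ∃ a b : ℝ, 0 ≤ a ∧ a < b ∧ r = intervalMean β a b f / intervalMean α a b f}

/-- The set of ratios `M_{I,β}(g)/M_{I,α}(g)` over bounded intervals `I ⊂ ℝ`;
its supremum is `R_{α,β}(g)`. -/
def ratioSetAll (α β : ℝ) (g : ℝ → ℝ) : Set ℝ :=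
  {r | ∃ a b : ℝ, a < b ∧ r = intervalMean β a b g / intervalMean α a b g}

/-- The function `C_{α,β,γ}(ε)` from the paper:
`C_{α,β,γ}(ε) = (ε^{γβ+1}+1)^{1/β} (1+ε)^{1/α} / ((ε^{γα+1}+1)^{1/α} (1+ε)^{1/β})`. -/
noncomputable def Cfun (α β γ ε : ℝ) : ℝ :=
  ((ε ^ (γ * β + 1) + 1) ^ (1 / β) * (1 + ε) ^ (1 / α)) /
    ((ε ^ (γ * α + 1) + 1) ^ (1 / α) * (1 + ε) ^ (1 / β))

section Aux
open Real

lemma intInt_abs_rpow {c : ℝ} (hc : -1 < c) {b : ℝ} (hb : 0 ≤ b) :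
    IntervalIntegrable (fun x : ℝ => |x| ^ c) volume 0 b := by
  rw [intervalIntegrable_iff_integrableOn_Ioc_of_le hb]
  have h1 : IntegrableOn (fun x : ℝ => x ^ c) (Ioc 0 b) volume := by
    rw [← intervalIntegrable_iff_integrableOn_Ioc_of_le hb]
    exact intervalIntegral.intervalIntegrable_rpow' hc
  exact h1.congr_fun (fun x hx => by rw [abs_of_pos hx.1]) measurableSet_Ioc

lemma integral_abs_rpow_nonneg {c : ℝ} (hc : -1 < c) {a b : ℝ} (ha : 0 ≤ a) (hb : 0 ≤ b) :
    ∫ x in a..b, |x| ^ c = (b ^ (c + 1) - a ^ (c + 1)) / (c + 1) := by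
  have heq : Set.EqOn (fun x : ℝ => |x| ^ c) (fun x : ℝ => x ^ c) (Set.uIcc a b) := by
    intro x hx
    have h0 : (0:ℝ) ≤ a ⊓ b := le_min ha hb
    have : 0 ≤ x := le_trans h0 hx.1
    simp only [abs_of_nonneg this]
  rw [intervalIntegral.integral_congr heq]
  exact integral_rpow (Or.inl hc)

lemma integral_abs_rpow_cross {c : ℝ} (hc : -1 < c) {a b : ℝ} (ha : a ≤ 0) (hb : 0 ≤ b) :
    ∫ x in a..b, |x| ^ c = ((-a) ^ (c + 1) + b ^ (c + 1)) / (c + 1) := by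
  have hc1 : c + 1 ≠ 0 := by linarith
  have hia : IntervalIntegrable (fun x : ℝ => |x| ^ c) volume a 0 := by
    have := (IntervalIntegrable.iff_comp_neg (h := enorm_ne_top)).mp (intInt_abs_rpow hc (neg_nonneg.mpr ha))
    simpa [abs_neg] using this.symm
  have hib : IntervalIntegrable (fun x : ℝ => |x| ^ c) volume 0 b := intInt_abs_rpow hc hb
  rw [← intervalIntegral.integral_add_adjacent_intervals hia hib]
  have h1 : ∫ x in a..(0:ℝ), |x| ^ c = ((-a) ^ (c + 1)) / (c + 1) := by
    have := intervalIntegral.integral_comp_neg (a := 0) (b := -a) (fun x : ℝ => |x| ^ c)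
    simp only [abs_neg, neg_neg, neg_zero] at this
    rw [← this, integral_abs_rpow_nonneg hc le_rfl (neg_nonneg.mpr ha),
      Real.zero_rpow hc1]
    ring
  have h2 : ∫ x in (0:ℝ)..b, |x| ^ c = (b ^ (c + 1)) / (c + 1) := by
    rw [integral_abs_rpow_nonneg hc le_rfl hb, Real.zero_rpow hc1]
    ring
  rw [h1, h2]
  ring

lemma intervalMean_abs_pow (p a b γ : ℝ) :
    intervalMean p a b (fun x => |x| ^ γ) =
      ((b - a)⁻¹ * ∫ x in a..b, |x| ^ (γ * p)) ^ (1 / p) := by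
  unfold intervalMean
  congr 1
  congr 1
  apply intervalIntegral.integral_congr
  intro x _
  show (|x| ^ γ) ^ p = |x| ^ (γ * p)
  rw [← Real.rpow_mul (abs_nonneg x)]

lemma mean_straddle {p γ b ε : ℝ} (hp : p ≠ 0) (hγp : γ * p > -1) (hb : 0 < b) (hε : 0 ≤ ε) :
    intervalMean p (-(ε * b)) b (fun x => |x| ^ γ) =
      b ^ γ * ((ε ^ (γ * p + 1) + 1) / ((1 + ε) * (γ * p + 1))) ^ (1 / p) := by
  have hA : 0 < γ * p + 1 := by linarith
  have hεb : 0 ≤ ε * b := mul_nonneg hε hb.le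
  rw [intervalMean_abs_pow,
    integral_abs_rpow_cross hγp (by linarith : -(ε*b) ≤ 0) hb.le, neg_neg,
    Real.mul_rpow hε hb.le]
  have hbc : b ^ (γ * p + 1) = b ^ (γ * p) * b := Real.rpow_add_one hb.ne' _
  have h1ε : (0:ℝ) < 1 + ε := by linarith
  have hbgp : (0:ℝ) < b ^ (γ * p) := Real.rpow_pos_of_pos hb _
  have hεA : (0:ℝ) ≤ ε ^ (γ * p + 1) := Real.rpow_nonneg hε _
  have key : (b - -(ε * b))⁻¹ * ((ε ^ (γ * p + 1) * b ^ (γ * p + 1) + b ^ (γ * p + 1)) / (γ * p + 1))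
      = b ^ (γ * p) * ((ε ^ (γ * p + 1) + 1) / ((1 + ε) * (γ * p + 1))) := by
    rw [hbc]
    have : b - -(ε * b) = b * (1 + ε) := by ring
    rw [this]
    field_simp
  rw [key, Real.mul_rpow hbgp.le (by positivity), ← Real.rpow_mul hb.le]
  congr 2
  field_simp

lemma mean_onesided {p γ b ε : ℝ} (hp : p ≠ 0) (hγp : γ * p > -1) (hb : 0 < b)
    (hε : 0 ≤ ε) (hε1 : ε < 1) :
    intervalMean p (ε * b) b (fun x => |x| ^ γ) =
      b ^ γ * ((1 - ε ^ (γ * p + 1)) / ((1 - ε) * (γ * p + 1))) ^ (1 / p) := by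
  have hA : 0 < γ * p + 1 := by linarith
  have hεA1 : ε ^ (γ * p + 1) < 1 := Real.rpow_lt_one hε hε1 hA
  rw [intervalMean_abs_pow,
    integral_abs_rpow_nonneg hγp (mul_nonneg hε hb.le) hb.le,
    Real.mul_rpow hε hb.le]
  have hbc : b ^ (γ * p + 1) = b ^ (γ * p) * b := Real.rpow_add_one hb.ne' _
  have h1ε : (0:ℝ) < 1 - ε := by linarith
  have hbgp : (0:ℝ) < b ^ (γ * p) := Real.rpow_pos_of_pos hb _
  have key : (b - ε * b)⁻¹ * ((b ^ (γ * p + 1) - ε ^ (γ * p + 1) * b ^ (γ * p + 1)) / (γ * p + 1))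
      = b ^ (γ * p) * ((1 - ε ^ (γ * p + 1)) / ((1 - ε) * (γ * p + 1))) := by
    rw [hbc]
    have : b - ε * b = b * (1 - ε) := by ring
    rw [this]
    field_simp
  rw [key, Real.mul_rpow hbgp.le
    (div_nonneg (by linarith) (by positivity)), ← Real.rpow_mul hb.le]
  congr 2
  field_simp

lemma convex_negloglike {l : ℝ} (hl : l < 0) :
    ConvexOn ℝ (Ioi (0:ℝ)) (fun c => -Real.log (1 - Real.exp (l * c))) := by
  have hpos : ∀ x ∈ Ioi (0:ℝ), 0 < 1 - Real.exp (l * x) := by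
    intro x hx
    have : l * x < 0 := mul_neg_of_neg_of_pos hl hx
    have := Real.exp_lt_one_iff.mpr this
    linarith
  have hderiv : ∀ x ∈ Ioi (0:ℝ), HasDerivAt (fun c => -Real.log (1 - Real.exp (l * c)))
      (Real.exp (l * x) * l / (1 - Real.exp (l * x))) x := by
    intro x hx
    have h1 : HasDerivAt (fun c : ℝ => l * c) l x := by
      simpa using (hasDerivAt_id x).const_mul l
    have h2 : HasDerivAt (fun c : ℝ => Real.exp (l * c)) (Real.exp (l * x) * l) x := h1.exp
    have h3 : HasDerivAt (fun c : ℝ => 1 - Real.exp (l * c)) (-(Real.exp (l * x) * l)) x :=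
      h2.const_sub 1
    have h4 := (h3.log (hpos x hx).ne').neg
    have h5 : HasDerivAt (fun c => -Real.log (1 - Real.exp (l * c)))
        (-(-(Real.exp (l * x) * l) / (1 - Real.exp (l * x)))) x := h4
    convert h5 using 1
    ring
  apply MonotoneOn.convexOn_of_deriv (convex_Ioi 0)
  · apply ContinuousOn.neg
    apply ContinuousOn.log
    · fun_prop
    · intro x hx; exact (hpos x hx).ne'
  · rw [interior_Ioi]
    intro x hx
    exact (hderiv x hx).differentiableAt.differentiableWithinAt
  · rw [interior_Ioi]
    intro x hx y hy hxy
    rw [(hderiv x hx).deriv, (hderiv y hy).deriv]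
    have hex : Real.exp (l * y) ≤ Real.exp (l * x) :=
      Real.exp_le_exp.mpr (by nlinarith)
    have hx1 := hpos x hx
    have hy1 := hpos y hy
    rw [div_le_div_iff₀ hx1 hy1]
    nlinarith [Real.exp_pos (l * x), Real.exp_pos (l * y)]

lemma key_log_ineq {α β γ ε : ℝ} (hαβ : α < β) (hα : α ≠ 0) (hβ : β ≠ 0) (hγ : γ ≠ 0)
    (hγα : γ * α > -1) (hγβ : γ * β > -1) (hε : 0 < ε) (hε1 : ε < 1) :
    (1 / β) * Real.log ((1 - ε ^ (γ * β + 1)) / (1 - ε)) ≤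
      (1 / α) * Real.log ((1 - ε ^ (γ * α + 1)) / (1 - ε)) := by
  set l := Real.log ε with hl
  have hlneg : l < 0 := Real.log_neg hε hε1
  have hrw : ∀ c : ℝ, ε ^ c = Real.exp (l * c) := fun c => Real.rpow_def_of_pos hε c
  set g : ℝ → ℝ := fun c => -Real.log (1 - Real.exp (l * c)) with hg
  have hconv := convex_negloglike hlneg
  have hA : ∀ p : ℝ, γ * p > -1 → (1:ℝ) + γ * p ∈ Ioi (0:ℝ) := fun p hp => by
    simp only [mem_Ioi]; linarith
  have h1 : (1:ℝ) ∈ Ioi (0:ℝ) := by norm_num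
  -- express the logs via g
  have hlog : ∀ p : ℝ, γ * p > -1 →
      Real.log ((1 - ε ^ (γ * p + 1)) / (1 - ε)) = -(g (1 + γ * p)) + g 1 := by
    intro p hp
    have hp1 : (0:ℝ) < γ * p + 1 := by linarith
    have hεp : ε ^ (γ * p + 1) < 1 := Real.rpow_lt_one hε.le hε1 hp1
    have h2 : (0:ℝ) < 1 - ε ^ (γ * p + 1) := by linarith
    have h3 : (0:ℝ) < 1 - ε := by linarith
    rw [Real.log_div h2.ne' h3.ne']
    simp only [hg, neg_neg]
    rw [hrw]
    have : l * (1 + γ * p) = l * (γ * p + 1) := by ring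
    rw [this]
    have : Real.exp (l * 1) = ε := by rw [mul_one, hl, Real.exp_log hε]
    rw [this]
    ring
  rw [hlog β hγβ, hlog α hγα]
  have hne : ∀ p : ℝ, p ≠ 0 → 1 + γ * p ≠ 1 := by
    intro p hp h
    exact (mul_ne_zero hγ hp) (by linarith)
  have hmul : ∀ X p : ℝ, p ≠ 0 → γ * (X / (γ * p)) = X / p := by
    intro X p hp; field_simp
  have key : (g (1 + γ * α) - g 1) / α ≤ (g (1 + γ * β) - g 1) / β := by
    rcases lt_or_gt_of_ne hγ with hγneg | hγpos
    · have hsec := hconv.secant_mono h1 (hA β hγβ) (hA α hγα) (hne β hβ) (hne α hα)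
        (by nlinarith)
      have eβ : 1 + γ * β - 1 = γ * β := by ring
      have eα : 1 + γ * α - 1 = γ * α := by ring
      rw [eβ, eα] at hsec
      have h2 := mul_le_mul_of_nonpos_left hsec (le_of_lt hγneg)
      rw [hmul _ α hα, hmul _ β hβ] at h2
      exact h2
    · have hsec := hconv.secant_mono h1 (hA α hγα) (hA β hγβ) (hne α hα) (hne β hβ)
        (by nlinarith)
      have eβ : 1 + γ * β - 1 = γ * β := by ring
      have eα : 1 + γ * α - 1 = γ * α := by ring
      rw [eβ, eα] at hsec
      have h2 := mul_le_mul_of_nonneg_left hsec (le_of_lt hγpos)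
      rw [hmul _ α hα, hmul _ β hβ] at h2
      exact h2
  have e1 : (1 / β) * (-(g (1 + γ * β)) + g 1) = -((g (1 + γ * β) - g 1) / β) := by ring
  have e2 : (1 / α) * (-(g (1 + γ * α)) + g 1) = -((g (1 + γ * α) - g 1) / α) := by ring
  rw [e1, e2]
  linarith [key]

lemma mean_reflect (p γ a b : ℝ) :
    intervalMean p a b (fun x => |x| ^ γ) = intervalMean p (-b) (-a) (fun x => |x| ^ γ) := by
  rw [intervalMean_abs_pow, intervalMean_abs_pow]
  have h := intervalIntegral.integral_comp_neg (a := a) (b := b) (fun x : ℝ => |x| ^ (γ * p))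
  simp only [abs_neg] at h
  rw [← h]
  congr 2
  ring

lemma ratio_straddle {α β γ b ε : ℝ} (hα : α ≠ 0) (hβ : β ≠ 0)
    (hγα : γ * α > -1) (hγβ : γ * β > -1) (hb : 0 < b) (hε : 0 ≤ ε) :
    intervalMean β (-(ε * b)) b (fun x => |x| ^ γ) /
      intervalMean α (-(ε * b)) b (fun x => |x| ^ γ) =
    Cfun α β γ ε * ((γ * α + 1) ^ (1 / α) / (γ * β + 1) ^ (1 / β)) := by
  have hAα : (0:ℝ) < γ * α + 1 := by linarith
  have hAβ : (0:ℝ) < γ * β + 1 := by linarith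
  have h1ε : (0:ℝ) < 1 + ε := by linarith
  have hεβ : (0:ℝ) ≤ ε ^ (γ * β + 1) := Real.rpow_nonneg hε _
  have hεα : (0:ℝ) ≤ ε ^ (γ * α + 1) := Real.rpow_nonneg hε _
  rw [mean_straddle hβ hγβ hb hε, mean_straddle hα hγα hb hε,
    mul_div_mul_left _ _ (Real.rpow_pos_of_pos hb γ).ne',
    Real.div_rpow (by linarith) (by positivity), Real.div_rpow (by linarith) (by positivity),
    Real.mul_rpow h1ε.le hAβ.le, Real.mul_rpow h1ε.le hAα.le, Cfun]
  have p1 : (0:ℝ) < (ε ^ (γ * β + 1) + 1) ^ (1/β) := Real.rpow_pos_of_pos (by linarith) _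
  have p2 : (0:ℝ) < (ε ^ (γ * α + 1) + 1) ^ (1/α) := Real.rpow_pos_of_pos (by linarith) _
  have p3 : (0:ℝ) < (1 + ε) ^ (1/β) := Real.rpow_pos_of_pos h1ε _
  have p4 : (0:ℝ) < (1 + ε) ^ (1/α) := Real.rpow_pos_of_pos h1ε _
  have p5 : (0:ℝ) < (γ * β + 1) ^ (1/β) := Real.rpow_pos_of_pos hAβ _
  have p6 : (0:ℝ) < (γ * α + 1) ^ (1/α) := Real.rpow_pos_of_pos hAα _
  field_simp

lemma ratio_onesided_le {α β γ b ε : ℝ} (hαβ : α < β) (hα : α ≠ 0) (hβ : β ≠ 0)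
    (hγα : γ * α > -1) (hγβ : γ * β > -1) (hb : 0 < b) (hε : 0 ≤ ε) (hε1 : ε < 1) :
    intervalMean β (ε * b) b (fun x => |x| ^ γ) /
      intervalMean α (ε * b) b (fun x => |x| ^ γ) ≤
    (γ * α + 1) ^ (1 / α) / (γ * β + 1) ^ (1 / β) := by
  have hAα : (0:ℝ) < γ * α + 1 := by linarith
  have hAβ : (0:ℝ) < γ * β + 1 := by linarith
  have h1ε : (0:ℝ) < 1 - ε := by linarith
  have hεβ : ε ^ (γ * β + 1) < 1 := Real.rpow_lt_one hε hε1 hAβ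
  have hεα : ε ^ (γ * α + 1) < 1 := Real.rpow_lt_one hε hε1 hAα
  rw [mean_onesided hβ hγβ hb hε hε1, mean_onesided hα hγα hb hε hε1,
    mul_div_mul_left _ _ (Real.rpow_pos_of_pos hb γ).ne']
  have hYβ : (0:ℝ) < (1 - ε ^ (γ * β + 1)) / ((1 - ε) * (γ * β + 1)) :=
    div_pos (by linarith) (by positivity)
  have hYα : (0:ℝ) < (1 - ε ^ (γ * α + 1)) / ((1 - ε) * (γ * α + 1)) :=
    div_pos (by linarith) (by positivity)
  have hL : (0:ℝ) < ((1 - ε ^ (γ * β + 1)) / ((1 - ε) * (γ * β + 1))) ^ (1/β) /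
      ((1 - ε ^ (γ * α + 1)) / ((1 - ε) * (γ * α + 1))) ^ (1/α) := by
    exact div_pos (Real.rpow_pos_of_pos hYβ _) (Real.rpow_pos_of_pos hYα _)
  have hR : (0:ℝ) < (γ * α + 1) ^ (1 / α) / (γ * β + 1) ^ (1 / β) :=
    div_pos (Real.rpow_pos_of_pos hAα _) (Real.rpow_pos_of_pos hAβ _)
  rw [← Real.log_le_log_iff hL hR]
  rw [Real.log_div (Real.rpow_pos_of_pos hYβ _).ne' (Real.rpow_pos_of_pos hYα _).ne',
    Real.log_div (Real.rpow_pos_of_pos hAα _).ne' (Real.rpow_pos_of_pos hAβ _).ne',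
    Real.log_rpow hYβ, Real.log_rpow hYα, Real.log_rpow hAα, Real.log_rpow hAβ]
  have eβ : (1 - ε ^ (γ * β + 1)) / ((1 - ε) * (γ * β + 1)) =
      ((1 - ε ^ (γ * β + 1)) / (1 - ε)) / (γ * β + 1) := by rw [div_div]
  have eα : (1 - ε ^ (γ * α + 1)) / ((1 - ε) * (γ * α + 1)) =
      ((1 - ε ^ (γ * α + 1)) / (1 - ε)) / (γ * α + 1) := by rw [div_div]
  rw [eβ, eα, Real.log_div (div_pos (by linarith : (0:ℝ) < 1 - ε ^ (γ * β + 1)) h1ε).ne' hAβ.ne',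
    Real.log_div (div_pos (by linarith : (0:ℝ) < 1 - ε ^ (γ * α + 1)) h1ε).ne' hAα.ne']
  have hkey : (1 / β) * Real.log ((1 - ε ^ (γ * β + 1)) / (1 - ε)) ≤
      (1 / α) * Real.log ((1 - ε ^ (γ * α + 1)) / (1 - ε)) := by
    rcases eq_or_lt_of_le hε with hε0 | hε0
    · rw [← hε0]
      rw [Real.zero_rpow hAβ.ne', Real.zero_rpow hAα.ne']
      norm_num
    rcases eq_or_ne γ 0 with hγ0 | hγ0
    · subst hγ0
      simp only [zero_mul, zero_add, Real.rpow_one]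
      rw [div_self h1ε.ne']
      simp
    · exact key_log_ineq hαβ hα hβ hγ0 hγα hγβ hε0 hε1
  nlinarith [hkey]


end Aux

/-- For `α < β` with `αβ ≠ 0` and `γ` with `αγ > -1`, `βγ > -1`, one has
`R_{α,β}(|x|^γ) = (max_{ε ∈ [0,1]} C_{α,β,γ}(ε)) · (γα+1)^{1/α}/(γβ+1)^{1/β}`,
and the maximum over the compact interval `[0,1]` is attained. -/
theorem R_power_eq_max_C_mul_P
    (α β γ : ℝ) (hαβ : α < β) (h0 : α * β ≠ 0)
    (hγα : α * γ > -1) (hγβ : β * γ > -1) :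
    ∃ ε₀ ∈ Icc (0 : ℝ) 1,
      (∀ ε ∈ Icc (0 : ℝ) 1, Cfun α β γ ε ≤ Cfun α β γ ε₀) ∧
      sSup (ratioSetAll α β (fun x => |x| ^ γ)) =
        Cfun α β γ ε₀ * ((γ * α + 1) ^ (1 / α) / (γ * β + 1) ^ (1 / β)) := by
  obtain ⟨hα, hβ⟩ := mul_ne_zero_iff.mp h0
  have hγα' : γ * α > -1 := by rwa [mul_comm]
  have hγβ' : γ * β > -1 := by rwa [mul_comm]
  have hAα : (0:ℝ) < γ * α + 1 := by linarith
  have hAβ : (0:ℝ) < γ * β + 1 := by linarith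
  set P : ℝ := (γ * α + 1) ^ (1 / α) / (γ * β + 1) ^ (1 / β) with hPdef
  have hPpos : 0 < P :=
    div_pos (Real.rpow_pos_of_pos hAα _) (Real.rpow_pos_of_pos hAβ _)
  -- continuity of Cfun on [0,1]
  have hcont : ContinuousOn (fun ε => Cfun α β γ ε) (Icc (0:ℝ) 1) := by
    simp only [Cfun]
    apply ContinuousOn.div
    · apply ContinuousOn.mul
      · apply ContinuousOn.rpow_const
        · exact (continuous_id.continuousOn.rpow_const
            (fun x _ => Or.inr hAβ.le)).add continuousOn_const
        · intro x hx
          left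
          have : (0:ℝ) ≤ x ^ (γ * β + 1) := Real.rpow_nonneg hx.1 _
          positivity
      · apply ContinuousOn.rpow_const
        · exact continuousOn_const.add continuous_id.continuousOn
        · intro x hx
          left
          have := hx.1
          positivity
    · apply ContinuousOn.mul
      · apply ContinuousOn.rpow_const
        · exact (continuous_id.continuousOn.rpow_const
            (fun x _ => Or.inr hAα.le)).add continuousOn_const
        · intro x hx
          left
          have : (0:ℝ) ≤ x ^ (γ * α + 1) := Real.rpow_nonneg hx.1 _
          positivity
      · apply ContinuousOn.rpow_const
        · exact continuousOn_const.add continuous_id.continuousOn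
        · intro x hx
          left
          have := hx.1
          positivity
    · intro x hx
      have h1 : (0:ℝ) < x ^ (γ * α + 1) + 1 := by
        have : (0:ℝ) ≤ x ^ (γ * α + 1) := Real.rpow_nonneg hx.1 _
        linarith
      have h2 : (0:ℝ) < 1 + x := by linarith [hx.1]
      exact (mul_pos (Real.rpow_pos_of_pos h1 _) (Real.rpow_pos_of_pos h2 _)).ne'
  obtain ⟨ε₀, hε₀mem, hmax⟩ :=
    isCompact_Icc.exists_isMaxOn (nonempty_Icc.mpr zero_le_one) hcont
  have hC0 : Cfun α β γ 0 = 1 := by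
    rw [Cfun, Real.zero_rpow hAβ.ne', Real.zero_rpow hAα.ne']
    norm_num
  have hC1 : 1 ≤ Cfun α β γ ε₀ := by
    rw [← hC0]; exact hmax (show (0:ℝ) ∈ Icc 0 1 from ⟨le_rfl, zero_le_one⟩)
  refine ⟨ε₀, hε₀mem, fun ε hε => hmax hε, ?_⟩
  -- upper bound for all ratios
  have hub : ∀ r ∈ ratioSetAll α β (fun x => |x| ^ γ), r ≤ Cfun α β γ ε₀ * P := by
    rintro r ⟨a, b, hab, rfl⟩
    have main : ∀ a b : ℝ, 0 < b → -b ≤ a → a < b →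
        intervalMean β a b (fun x => |x| ^ γ) / intervalMean α a b (fun x => |x| ^ γ) ≤
          Cfun α β γ ε₀ * P := by
      intro a b hb hba hab
      by_cases ha : a ≤ 0
      · have hae : a = -((-a / b) * b) := by field_simp
        have hε : 0 ≤ -a / b := div_nonneg (by linarith) hb.le
        have hε1 : -a / b ≤ 1 := by rw [div_le_one hb]; linarith
        rw [hae, ratio_straddle hα hβ hγα' hγβ' hb hε]
        exact mul_le_mul_of_nonneg_right (hmax ⟨hε, hε1⟩) hPpos.le
      · push_neg at ha
        have hae : a = (a / b) * b := by field_simp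
        have hε : 0 ≤ a / b := div_nonneg ha.le hb.le
        have hε1 : a / b < 1 := by rw [div_lt_one hb]; exact hab
        rw [hae]
        refine le_trans (ratio_onesided_le hαβ hα hβ hγα' hγβ' hb hε hε1) ?_
        nlinarith
    by_cases hcase : 0 < b ∧ -b ≤ a
    · exact main a b hcase.1 hcase.2 hab
    · have hcond : a < 0 ∧ a ≤ -b := by
        rcases not_and_or.mp hcase with h | h
        · push_neg at h
          constructor <;> linarith
        · push_neg at h
          constructor <;> linarith
      rw [mean_reflect β γ a b, mean_reflect α γ a b]
      exact main (-b) (-a) (by linarith [hcond.1]) (by linarith [hcond.2]) (by linarith)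
  -- the bound is attained
  have hmem : Cfun α β γ ε₀ * P ∈ ratioSetAll α β (fun x => |x| ^ γ) := by
    refine ⟨-(ε₀ * 1), 1, by nlinarith [hε₀mem.1], ?_⟩
    rw [ratio_straddle hα hβ hγα' hγβ' one_pos hε₀mem.1]
  exact le_antisymm (csSup_le ⟨_, hmem⟩ hub) (le_csSup ⟨_, hub⟩ hmem)
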